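/- Barrier computation: Let n ≥ 2, p ∈ (1,∞), γ > 0, c > 0, r₀ > 0 and x₀ ∈ ℝⁿ, and define ψ(x) := c·(r₀^{−γ} − |x − x₀|^{−γ}) for x ∈ ℝⁿ, x ≠ x₀. Then for every x ≠ x₀ one has Δψ(x) + (p−2)·∂ₙₙψ(x) = −(c·γ / |x−x₀|^{γ+4}) · [ (γ − n − p + 4)·|x − x₀|² + (p−2)·(γ+2)·((x−x₀)·eₙ)² ]. Consequently, if either p ≥ 2 and γ > n + p − 4, or 1 < p < 2 and γ > (n−p)/(p−1), then Δψ(x) + (p−2)·∂ₙₙψ(x) < 0 for every x ≠ x₀. -/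

import Mathlib

open Set Filter Metric MeasureTheory Topology
open scoped InnerProductSpace NNReal

noncomputable section

namespace TwoPhaseBernoulli

/-- Euclidean space `ℝⁿ`. -/
abbrev E (n : ℕ) := EuclideanSpace ℝ (Fin n)

/-- the `i`-th standard basis vector of `ℝⁿ` -/
def bVec (n : ℕ) (i : Fin n) : E n := EuclideanSpace.single i 1

/-- the `n`-th standard basis vector `eₙ` of `ℝⁿ` -/
def eVec (n : ℕ) : E n :=
  if h : 0 < n then EuclideanSpace.single ⟨n - 1, Nat.sub_lt h Nat.one_pos⟩ 1 else 0

/-- Hessian of `f` at `x`, as a continuous linear map. -/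
def hess (n : ℕ) (f : E n → ℝ) (x : E n) : E n →L[ℝ] E n :=
  fderiv ℝ (gradient f) x

/-- Laplacian: the trace of the Hessian. -/
def lap (n : ℕ) (f : E n → ℝ) (x : E n) : ℝ :=
  ∑ i : Fin n, ⟪hess n f x (bVec n i), bVec n i⟫_ℝ

/-- second derivative in the direction `eₙ` -/
def dnn (n : ℕ) (f : E n → ℝ) (x : E n) : ℝ := ⟪hess n f x (eVec n), eVec n⟫_ℝ

/-- the linearized operator `L_p = Δ + (p-2)∂ₙₙ` -/
def Lp (n : ℕ) (p : ℝ) (f : E n → ℝ) (x : E n) : ℝ :=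
  lap n f x + (p - 2) * dnn n f x

/-- the classical `p`-Laplacian `div(|∇f|^{p-2}∇f)` evaluated at a point of
nonvanishing gradient, via the formula
`|∇f|^{p-4} (|∇f|² Δf + (p-2) ∇fᵀ D²f ∇f)`. -/
def pLap (n : ℕ) (p : ℝ) (f : E n → ℝ) (x : E n) : ℝ :=
  ‖gradient f x‖ ^ (p - 4) *
    (‖gradient f x‖ ^ 2 * lap n f x
      + (p - 2) * ⟪hess n f x (gradient f x), gradient f x⟫_ℝ)

/-- a continuous linear map `ℝⁿ → ℝⁿ` is symmetric (i.e. a symmetric matrix) -/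
def symCLM (n : ℕ) (M : E n →L[ℝ] E n) : Prop :=
  ∀ x y : E n, ⟪M x, y⟫_ℝ = ⟪x, M y⟫_ℝ

/-- trace of a continuous linear map `ℝⁿ → ℝⁿ` (i.e. of a matrix) -/
def trCLM (n : ℕ) (M : E n →L[ℝ] E n) : ℝ :=
  ∑ i : Fin n, ⟪M (bVec n i), bVec n i⟫_ℝ

/-- `Q` touches `u` from below at `x₀` -/
def TouchesBelow (n : ℕ) (Q u : E n → ℝ) (x₀ : E n) : Prop :=
  Q x₀ = u x₀ ∧ ∀ᶠ x in 𝓝 x₀, Q x ≤ u x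

/-- `Q` touches `u` from above at `x₀` -/
def TouchesAbove (n : ℕ) (Q u : E n → ℝ) (x₀ : E n) : Prop :=
  Q x₀ = u x₀ ∧ ∀ᶠ x in 𝓝 x₀, u x ≤ Q x

/-- positivity set `Ω⁺_u` -/
def posSet (n : ℕ) (u : E n → ℝ) : Set (E n) := {x | 0 < u x}

/-- negativity set `Ω⁻_u` -/
def negSet (n : ℕ) (u : E n → ℝ) : Set (E n) := {x | u x < 0}

/-- two-phase points `Γ_TP(u) = ∂Ω⁺_u ∩ ∂Ω⁻_u ∩ D` -/
def GammaTP (n : ℕ) (D : Set (E n)) (u : E n → ℝ) : Set (E n) :=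
  frontier (posSet n u) ∩ frontier (negSet n u) ∩ D

/-- one-phase positive points `Γ⁺ = (∂Ω⁺_u \ ∂Ω⁻_u) ∩ D` -/
def GammaPlus (n : ℕ) (D : Set (E n)) (u : E n → ℝ) : Set (E n) :=
  (frontier (posSet n u) \ frontier (negSet n u)) ∩ D

/-- one-phase negative points `Γ⁻ = (∂Ω⁻_u \ ∂Ω⁺_u) ∩ D` -/
def GammaMinus (n : ℕ) (D : Set (E n)) (u : E n → ℝ) : Set (E n) :=
  (frontier (negSet n u) \ frontier (posSet n u)) ∩ D

/-- interior two-phase points: `|B_r(x₀) ∩ {u = 0}| = 0` for some `r > 0` -/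
def IntTP (n : ℕ) (D : Set (E n)) (u : E n → ℝ) : Set (E n) :=
  {x ∈ GammaTP n D u | ∃ r > 0, volume (ball x r ∩ {y | u y = 0}) = 0}

lemma sq_hasFDerivAt (n : ℕ) (x₀ x : E n) :
    HasFDerivAt (fun y : E n => ⟪y - x₀, y - x₀⟫_ℝ) ((2:ℝ) • (innerSL ℝ (x - x₀))) x := by
  have h : HasFDerivAt (fun y : E n => y - x₀) (ContinuousLinearMap.id ℝ (E n)) x :=
    (hasFDerivAt_id x).sub_const x₀
  have := h.inner ℝ h
  refine this.congr_fderiv ?_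
  ext v
  simp only [ContinuousLinearMap.smul_apply, innerSL_apply_apply, ContinuousLinearMap.comp_apply,
    ContinuousLinearMap.prod_apply, fderivInnerCLM_apply, ContinuousLinearMap.id_apply,
    smul_eq_mul]
  rw [real_inner_comm]
  ring

lemma sq_ne (n : ℕ) (x₀ x : E n) (hx : x ≠ x₀) : (⟪x - x₀, x - x₀⟫_ℝ) ≠ 0 := by
  rw [real_inner_self_eq_norm_sq]
  have : ‖x - x₀‖ ≠ 0 := by simp [sub_eq_zero, hx]
  positivity

lemma norm_rpow_eq (n : ℕ) (γ : ℝ) (v : E n) :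
    ‖v‖ ^ (-γ) = (⟪v, v⟫_ℝ) ^ (-γ/2) := by
  rw [real_inner_self_eq_norm_sq, ← Real.rpow_natCast ‖v‖ 2, ← Real.rpow_mul (norm_nonneg _)]
  norm_num
  congr 1
  ring

lemma grad_hasGradientAt (n : ℕ) (γ c r₀ : ℝ) (x₀ x : E n) (hx : x ≠ x₀) :
    HasGradientAt (fun y : E n => c * (r₀ ^ (-γ) - ‖y - x₀‖ ^ (-γ)))
      ((c * γ * (⟪x - x₀, x - x₀⟫_ℝ) ^ (-γ/2 - 1)) • (x - x₀)) x := by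
  have hs := sq_ne n x₀ x hx
  have h1 := ((sq_hasFDerivAt n x₀ x).rpow_const (p := -γ/2) (Or.inl hs))
  have h2 := (h1.const_sub (r₀ ^ (-γ))).const_mul c
  rw [hasGradientAt_iff_hasFDerivAt]
  have hfun : (fun y : E n => c * (r₀ ^ (-γ) - ‖y - x₀‖ ^ (-γ)))
      = fun y : E n => c * (r₀ ^ (-γ) - (⟪y - x₀, y - x₀⟫_ℝ) ^ (-γ/2)) := by
    funext y; rw [norm_rpow_eq]
  rw [hfun]
  refine h2.congr_fderiv ?_
  ext v
  simp [InnerProductSpace.toDual_apply_apply, real_inner_smul_left]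
  ring

lemma hess_inner (n : ℕ) (γ c r₀ : ℝ) (x₀ x : E n) (hx : x ≠ x₀) (v : E n) :
    ⟪hess n (fun y : E n => c * (r₀ ^ (-γ) - ‖y - x₀‖ ^ (-γ))) x v, v⟫_ℝ =
      c * γ * (⟪x - x₀, x - x₀⟫_ℝ) ^ (-γ/2 - 1) * ⟪v, v⟫_ℝ
        + 2 * c * γ * (-γ/2 - 1) * (⟪x - x₀, x - x₀⟫_ℝ) ^ (-γ/2 - 2) * ⟪x - x₀, v⟫_ℝ ^ 2 := by
  set f : E n → ℝ := fun y => c * (r₀ ^ (-γ) - ‖y - x₀‖ ^ (-γ)) with hf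
  set G : E n → E n := fun y => (c * γ * (⟪y - x₀, y - x₀⟫_ℝ) ^ (-γ/2 - 1)) • (y - x₀) with hG
  have hev : gradient f =ᶠ[𝓝 x] G := by
    filter_upwards [isOpen_compl_singleton.mem_nhds hx] with y hy
    exact (grad_hasGradientAt n γ c r₀ x₀ y hy).gradient
  have hs := sq_ne n x₀ x hx
  have ha := ((sq_hasFDerivAt n x₀ x).rpow_const (p := -γ/2 - 1) (Or.inl hs)).const_mul (c * γ)
  have hv : HasFDerivAt (fun y : E n => y - x₀) (ContinuousLinearMap.id ℝ (E n)) x :=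
    (hasFDerivAt_id x).sub_const x₀
  have hGd := ha.smul hv
  have : hess n f x = fderiv ℝ G x := by
    rw [hess, hev.fderiv_eq]
  rw [this, show fderiv ℝ G x = _ from hGd.fderiv]
  simp only [ContinuousLinearMap.add_apply, ContinuousLinearMap.smul_apply,
    ContinuousLinearMap.smulRight_apply, ContinuousLinearMap.id_apply, innerSL_apply_apply,
    inner_add_left, real_inner_smul_left, smul_eq_mul]
  ring

/-- **Barrier computation**: the explicit value of `L_p ψ = Δψ + (p−2)∂ₙₙψ` for the
radial barrier `ψ(x) = c (r₀^{−γ} − |x−x₀|^{−γ})`, and its strict negativity for a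
suitable choice of `γ`. -/
theorem barrier_computation
    (n : ℕ) (hn : 2 ≤ n) (p γ c r₀ : ℝ) (hp1 : 1 < p)
    (hγ : 0 < γ) (hc : 0 < c) (hr : 0 < r₀) (x₀ : E n) :
    (∀ x : E n, x ≠ x₀ →
      Lp n p (fun y => c * (r₀ ^ (-γ) - ‖y - x₀‖ ^ (-γ))) x =
        -(c * γ / ‖x - x₀‖ ^ (γ + 4)) *
          ((γ - n - p + 4) * ‖x - x₀‖ ^ 2
            + (p - 2) * (γ + 2) * ⟪x - x₀, eVec n⟫_ℝ ^ 2)) ∧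
    (((2 ≤ p ∧ (n : ℝ) + p - 4 < γ) ∨ (p < 2 ∧ ((n : ℝ) - p) / (p - 1) < γ)) →
      ∀ x : E n, x ≠ x₀ →
        Lp n p (fun y => c * (r₀ ^ (-γ) - ‖y - x₀‖ ^ (-γ))) x < 0) := by
  have hn0 : 0 < n := by omega
  set i₀ : Fin n := ⟨n - 1, Nat.sub_lt hn0 Nat.one_pos⟩ with hi₀
  have he : eVec n = bVec n i₀ := by rw [eVec, dif_pos hn0]; rfl
  have key : ∀ x : E n, x ≠ x₀ →
      Lp n p (fun y => c * (r₀ ^ (-γ) - ‖y - x₀‖ ^ (-γ))) x =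
        -(c * γ / ‖x - x₀‖ ^ (γ + 4)) *
          ((γ - n - p + 4) * ‖x - x₀‖ ^ 2
            + (p - 2) * (γ + 2) * ⟪x - x₀, eVec n⟫_ℝ ^ 2) := by
    intro x hx
    have hr0 : (0:ℝ) < ‖x - x₀‖ := by
      rw [norm_pos_iff]; exact sub_ne_zero.mpr hx
    set r : ℝ := ‖x - x₀‖ with hrdef
    have hs : ⟪x - x₀, x - x₀⟫_ℝ = r ^ 2 := real_inner_self_eq_norm_sq _
    have hbb : ∀ i : Fin n, ⟪bVec n i, bVec n i⟫_ℝ = 1 := by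
      intro i
      simp [bVec, EuclideanSpace.inner_single_left, EuclideanSpace.single_apply]
    have hub : ∀ i : Fin n, ⟪x - x₀, bVec n i⟫_ℝ = (x - x₀) i := by
      intro i
      simp [bVec, EuclideanSpace.inner_single_right]
    have hsum : ∑ i : Fin n, ((x - x₀) i) ^ 2 = r ^ 2 := by
      rw [← hs]
      simp only [PiLp.inner_apply, RCLike.inner_apply, conj_trivial]
      exact Finset.sum_congr rfl fun i _ => sq ((x - x₀) i)
    set a : ℝ := c * γ * (⟪x - x₀, x - x₀⟫_ℝ) ^ (-γ/2 - 1) with hadef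
    set K : ℝ := 2 * c * γ * (-γ/2 - 1) * (⟪x - x₀, x - x₀⟫_ℝ) ^ (-γ/2 - 2) with hKdef
    have hlap : lap n (fun y => c * (r₀ ^ (-γ) - ‖y - x₀‖ ^ (-γ))) x
        = n * a + K * r ^ 2 := by
      rw [lap]
      calc ∑ i : Fin n, ⟪hess n (fun y => c * (r₀ ^ (-γ) - ‖y - x₀‖ ^ (-γ))) x (bVec n i),
              bVec n i⟫_ℝ
          = ∑ i : Fin n, (a * 1 + K * ((x - x₀) i) ^ 2) := by
            refine Finset.sum_congr rfl fun i _ => ?_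
            rw [hess_inner n γ c r₀ x₀ x hx (bVec n i), hbb i, hub i]
        _ = n * a + K * r ^ 2 := by
            rw [Finset.sum_add_distrib]
            simp only [mul_one, Finset.sum_const, Finset.card_univ, Fintype.card_fin,
              nsmul_eq_mul, ← Finset.mul_sum, hsum]
    have hdnn : dnn n (fun y => c * (r₀ ^ (-γ) - ‖y - x₀‖ ^ (-γ))) x
        = a + K * ((x - x₀) i₀) ^ 2 := by
      rw [dnn, he, hess_inner n γ c r₀ x₀ x hx (bVec n i₀), hbb i₀, hub i₀]
      ring
    have hevec : ⟪x - x₀, eVec n⟫_ℝ = (x - x₀) i₀ := by rw [he]; exact hub i₀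
    have hnn : (r:ℝ) ^ 2 = r ^ (2:ℝ) := by
      rw [← Real.rpow_natCast r 2]; norm_num
    have E2 : (⟪x - x₀, x - x₀⟫_ℝ) ^ (-γ/2 - 1) = r ^ (-(γ+4)) * r ^ 2 := by
      rw [hs, hnn, ← Real.rpow_mul hr0.le, ← Real.rpow_add hr0]
      congr 1
      ring
    have E3 : (⟪x - x₀, x - x₀⟫_ℝ) ^ (-γ/2 - 2) = r ^ (-(γ+4)) := by
      rw [hs, hnn, ← Real.rpow_mul hr0.le]
      congr 1
      ring
    have hinv : r ^ (-(γ+4)) = (r ^ (γ+4))⁻¹ := Real.rpow_neg hr0.le _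
    have hAne : r ^ (γ+4) ≠ 0 := ne_of_gt (Real.rpow_pos_of_pos hr0 _)
    rw [Lp, hlap, hdnn, hadef, hKdef, E2, E3, hinv, hevec]
    field_simp
    ring
  refine ⟨key, ?_⟩
  rintro hcase x hx
  rw [key x hx]
  have hr0 : (0:ℝ) < ‖x - x₀‖ := by
    rw [norm_pos_iff]; exact sub_ne_zero.mpr hx
  set r : ℝ := ‖x - x₀‖ with hrdef
  set t : ℝ := ⟪x - x₀, eVec n⟫_ℝ with htdef
  have hee : ⟪eVec n, eVec n⟫_ℝ = 1 := by
    rw [he]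
    simp [bVec, EuclideanSpace.inner_single_left, EuclideanSpace.single_apply]
  have ht2 : t ^ 2 ≤ r ^ 2 := by
    have := real_inner_mul_inner_self_le (x - x₀) (eVec n)
    rw [hee, real_inner_self_eq_norm_sq] at this
    calc t ^ 2 = t * t := sq t
      _ ≤ r ^ 2 * 1 := this
      _ = r ^ 2 := by ring
  have hApos : 0 < r ^ (γ+4) := Real.rpow_pos_of_pos hr0 _
  have hq : 0 < c * γ / r ^ (γ+4) := div_pos (mul_pos hc hγ) hApos
  have hr2 : (0:ℝ) < r ^ 2 := pow_pos hr0 2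
  have hB : 0 < (γ - n - p + 4) * r ^ 2 + (p - 2) * (γ + 2) * t ^ 2 := by
    rcases hcase with ⟨hp2, hγ2⟩ | ⟨hp2, hγ2⟩
    · have h1 : (0:ℝ) < (γ - n - p + 4) * r ^ 2 :=
        mul_pos (by linarith) hr2
      have h2 : (0:ℝ) ≤ (p - 2) * (γ + 2) * t ^ 2 :=
        mul_nonneg (mul_nonneg (by linarith) (by linarith)) (sq_nonneg t)
      linarith
    · have hp1' : (0:ℝ) < p - 1 := by linarith
      have hnp : (n:ℝ) - p < γ * (p - 1) := (div_lt_iff₀ hp1').mp hγ2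
      have h1 : (0:ℝ) ≤ (2 - p) * (γ + 2) * (r ^ 2 - t ^ 2) :=
        mul_nonneg (mul_nonneg (by linarith) (by linarith)) (by linarith)
      have h2 : (0:ℝ) < ((p - 1) * γ + p - n) * r ^ 2 :=
        mul_pos (by nlinarith) hr2
      nlinarith
  have := mul_pos hq hB
  linarith
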